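/- Let (M,d) be a pointed metric space with base point 0 whose metric takes only integer values. Then for every finitely supported function μ : M → ℝ there exists a function f : M → ℝ with f(0) = 0, f 1-Lipschitz and f taking only integer values, such that Σ_{x∈M} μ(x)·f(x) = ‖μ‖ (the free norm). In particular, the supremum defining ‖μ‖ is attained at an integer-valued 1-Lipschitz function. -/

import Mathlib

open scoped BigOperators

/-- The free norm of a finitely supported function `μ : M → ℝ` over a pointed metric
space `(M, z)`. -/
noncomputable def freeNorm {M : Type*} [MetricSpace M] (z : M) (μ : M →₀ ℝ) : ℝ :=
  sSup {s | ∃ f : M → ℝ, f z = 0 ∧ LipschitzWith 1 f ∧ s = ∑ x ∈ μ.support, μ x * f x}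

open intervalIntegral

set_option maxHeartbeats 1000000


lemma floorLip (a b : ℝ) (n : ℕ) (h : |a - b| ≤ n) :
    |((⌊a⌋ : ℤ) : ℝ) - ((⌊b⌋ : ℤ) : ℝ)| ≤ n := by
  rw [abs_le] at h ⊢
  constructor
  · have hba : b ≤ a + n := by linarith [h.1]
    have h2 := Int.floor_le_floor hba
    rw [Int.floor_add_natCast] at h2
    have : (⌊b⌋ : ℝ) ≤ ⌊a⌋ + n := by exact_mod_cast h2
    linarith
  · have hab : a ≤ b + n := by linarith [h.2]
    have h2 := Int.floor_le_floor hab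
    rw [Int.floor_add_natCast] at h2
    have : (⌊a⌋ : ℝ) ≤ ⌊b⌋ + n := by exact_mod_cast h2
    linarith

lemma intIntegrable_floor (a : ℝ) :
    IntervalIntegrable (fun t => ((⌊a + t⌋ : ℤ) : ℝ)) MeasureTheory.volume 0 1 := by
  apply Monotone.intervalIntegrable
  intro s t hst
  have h : ⌊a + s⌋ ≤ ⌊a + t⌋ := Int.floor_le_floor (by linarith)
  show ((⌊a + s⌋ : ℤ) : ℝ) ≤ ((⌊a + t⌋ : ℤ) : ℝ)
  exact_mod_cast h

lemma fract_periodic' : Function.Periodic Int.fract (1 : ℝ) := fun x => Int.fract_add_one x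

lemma contInt (a : ℝ) : IntervalIntegrable (fun t : ℝ => a + t) MeasureTheory.volume 0 1 :=
  (Continuous.intervalIntegrable (by continuity) 0 1)

lemma integral_fract01 : ∫ t in (0:ℝ)..1, Int.fract t = 1/2 := by
  have h : ∫ t in (0:ℝ)..1, Int.fract t = ∫ t in (0:ℝ)..1, t := by
    apply integral_congr_ae
    have h1 : ∀ᵐ x ∂MeasureTheory.volume, x ≠ (1:ℝ) := by
      rw [MeasureTheory.ae_iff]
      have : {x : ℝ | ¬x ≠ 1} = {1} := by ext x; simp
      rw [this]
      exact Real.volume_singleton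
    filter_upwards [h1] with x hx hmem
    rw [Set.uIoc_of_le (by norm_num : (0:ℝ) ≤ 1)] at hmem
    have h0 : (0:ℝ) ≤ x := le_of_lt hmem.1
    have h1' : x < 1 := lt_of_le_of_ne hmem.2 hx
    exact Int.fract_eq_self.2 ⟨h0, h1'⟩
  rw [h]
  rw [integral_id]
  norm_num

lemma integral_floor' (a : ℝ) : ∫ t in (0:ℝ)..1, ((⌊a + t⌋ : ℤ) : ℝ) = a := by
  have key : ∀ t : ℝ, ((⌊a + t⌋ : ℤ) : ℝ) = (a + t) - Int.fract (a + t) := by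
    intro t; rw [Int.self_sub_fract]
  have hfr : IntervalIntegrable (fun t => Int.fract (a + t)) MeasureTheory.volume 0 1 := by
    have : (fun t => Int.fract (a + t)) = (fun t => (a + t) - ((⌊a + t⌋ : ℤ) : ℝ)) := by
      funext t; rw [Int.self_sub_floor]
    rw [this]
    exact (contInt a).sub (intIntegrable_floor a)
  have h1 : ∫ t in (0:ℝ)..1, ((⌊a + t⌋ : ℤ) : ℝ)
      = (∫ t in (0:ℝ)..1, (a + t)) - ∫ t in (0:ℝ)..1, Int.fract (a + t) := by
    rw [← integral_sub (contInt a) hfr]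
    exact integral_congr fun t _ => key t
  have h2 : ∫ t in (0:ℝ)..1, (a + t) = a + 1/2 := by
    have := integral_add (μ := MeasureTheory.volume) (a := (0:ℝ)) (b := 1)
      (f := fun _ => a) (g := fun t => t) (continuous_const.intervalIntegrable 0 1)
      (Continuous.intervalIntegrable (by continuity) 0 1)
    rw [this, integral_id, integral_const]
    norm_num
  have h3 : ∫ t in (0:ℝ)..1, Int.fract (a + t) = 1/2 := by
    rw [integral_comp_add_left Int.fract a]
    have heq := fract_periodic'.intervalIntegral_add_eq a 0
    simp only [zero_add] at heq
    rw [show a + 0 = a by ring]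
    rw [heq]
    exact integral_fract01
  rw [h1, h2, h3]; ring

/-- If the metric of `M` takes only integer values, then the free norm of any finitely
supported `μ : M → ℝ` is attained at an integer-valued `1`-Lipschitz function
vanishing at the base point. -/
theorem freeNorm_attained_at_integer_valued
    {M : Type*} [MetricSpace M] (z : M)
    (hint : ∀ x y : M, ∃ n : ℕ, dist x y = n) (μ : M →₀ ℝ) :
    ∃ f : M → ℝ, f z = 0 ∧ LipschitzWith 1 f ∧ (∀ x : M, ∃ k : ℤ, f x = k) ∧
      ∑ x ∈ μ.support, μ x * f x = freeNorm z μ := by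
  classical
  set A := {s | ∃ f : M → ℝ, f z = 0 ∧ LipschitzWith 1 f ∧ s = ∑ x ∈ μ.support, μ x * f x}
    with hAdef
  have hlip0 : LipschitzWith 1 (fun _ : M => (0:ℝ)) := (LipschitzWith.const 0).weaken zero_le_one
  have h0A : (0:ℝ) ∈ A := ⟨fun _ => 0, rfl, hlip0, by simp⟩
  have hfb : ∀ f : M → ℝ, f z = 0 → LipschitzWith 1 f → ∀ x, |f x| ≤ dist x z := by
    intro f hz hf x
    have h := hf.dist_le_mul x z
    rw [Real.dist_eq, hz, sub_zero] at h
    simpa using h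
  have hbdd : BddAbove A := by
    refine ⟨∑ x ∈ μ.support, |μ x| * dist x z, fun s hs => ?_⟩
    obtain ⟨f, hz, hf, rfl⟩ := hs
    apply Finset.sum_le_sum
    intro x _
    calc μ x * f x ≤ |μ x * f x| := le_abs_self _
    _ = |μ x| * |f x| := abs_mul _ _
    _ ≤ |μ x| * dist x z := by
        exact mul_le_mul_of_nonneg_left (hfb f hz hf x) (abs_nonneg _)
  set I := {s | ∃ f : M → ℝ, f z = 0 ∧ LipschitzWith 1 f ∧ (∀ x : M, ∃ k : ℤ, f x = k) ∧
      s = ∑ x ∈ μ.support, μ x * f x} with hIdef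
  have hIA : I ⊆ A := fun s ⟨f, h1, h2, _, h4⟩ => ⟨f, h1, h2, h4⟩
  have h0I : (0:ℝ) ∈ I := ⟨fun _ => 0, rfl, hlip0, fun x => ⟨0, by simp⟩, by simp⟩
  -- finiteness of I
  set N : ℤ := ⌈∑ x ∈ μ.support, dist x z⌉ with hNdef
  have hdN : ∀ x ∈ μ.support, dist x z ≤ (N : ℝ) := by
    intro x hx
    calc dist x z ≤ ∑ y ∈ μ.support, dist y z :=
        Finset.single_le_sum (f := fun y => dist y z) (fun y _ => dist_nonneg) hx
    _ ≤ (N : ℝ) := Int.le_ceil _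
  have hIfin : I.Finite := by
    have hsub : I ⊆ Set.range (fun k : (↥μ.support → ↥(Finset.Icc (-N) N)) =>
        ∑ x ∈ μ.support.attach, μ x * (((k x : ℤ) : ℝ))) := by
      rintro s ⟨f, hz, hf, hk, rfl⟩
      have hmem : ∀ x : ↥μ.support, ⌊f x⌋ ∈ Finset.Icc (-N) N := by
        intro x
        have hb := hfb f hz hf x
        have hd := hdN x x.2
        rw [abs_le] at hb
        rw [Finset.mem_Icc]
        constructor
        · exact Int.le_floor.2 (by push_cast; linarith)
        · calc ⌊(f x : ℝ)⌋ ≤ ⌊(N : ℝ)⌋ := Int.floor_le_floor (by linarith)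
          _ = N := Int.floor_intCast N
      refine ⟨fun x => ⟨⌊f x⌋, hmem x⟩, ?_⟩
      simp only
      rw [← Finset.sum_attach μ.support (fun x => μ x * f x)]
      apply Finset.sum_congr rfl
      intro x _
      congr 1
      obtain ⟨k, hk'⟩ := hk x
      rw [hk', Int.floor_intCast]
    exact (Set.finite_range _).subset hsub
  have hIne : I.Nonempty := ⟨0, h0I⟩
  obtain ⟨v, hvI, hvmax⟩ : ∃ v ∈ I, ∀ w ∈ I, w ≤ v := by
    obtain ⟨v, hv, hmax⟩ := Set.Finite.exists_maximalFor id I hIfin hIne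
    refine ⟨v, hv, fun w hw => ?_⟩
    rcases le_total w v with h | h
    · exact h
    · exact hmax hw h
  -- rounding: every element of A is ≤ v
  have hAle : ∀ s ∈ A, s ≤ v := by
    rintro s ⟨f, hz, hf, rfl⟩
    set g : ℝ → M → ℝ := fun t x => ((⌊f x + t⌋ : ℤ) : ℝ) - ((⌊t⌋ : ℤ) : ℝ) with hgdef
    have hgI : ∀ t : ℝ, (∑ x ∈ μ.support, μ x * g t x) ∈ I := by
      intro t
      refine ⟨g t, ?_, ?_, ?_, rfl⟩
      · simp [hgdef, hz]
      · rw [lipschitzWith_iff_dist_le_mul]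
        intro x y
        obtain ⟨n, hn⟩ := hint x y
        have hd := hf.dist_le_mul x y
        rw [Real.dist_eq] at hd
        rw [Real.dist_eq, hn]
        have habs : |(f x + t) - (f y + t)| ≤ n := by
          rw [show (f x + t) - (f y + t) = f x - f y by ring]
          calc |f x - f y| ≤ 1 * dist x y := by simpa using hd
          _ = n := by rw [hn]; simp
        have := floorLip (f x + t) (f y + t) n habs
        simp only [NNReal.coe_one, one_mul]
        have hg : g t x - g t y = ((⌊f x + t⌋ : ℤ) : ℝ) - ((⌊f y + t⌋ : ℤ) : ℝ) := by
          simp only [hgdef]; ring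
        rw [hg]; exact this
      · intro x
        exact ⟨⌊f x + t⌋ - ⌊t⌋, by rw [hgdef]; push_cast; ring⟩
    -- integrability of each term
    have hterm : ∀ x : M, IntervalIntegrable (fun t => μ x * g t x)
        MeasureTheory.volume 0 1 := by
      intro x
      have h1 := intIntegrable_floor (f x)
      have h2 : IntervalIntegrable (fun t => ((⌊t⌋ : ℤ) : ℝ)) MeasureTheory.volume 0 1 := by
        have := intIntegrable_floor 0
        simpa using this
      exact ((h1.sub h2).const_mul (μ x))
    have hFint : IntervalIntegrable (fun t => ∑ x ∈ μ.support, μ x * g t x)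
        MeasureTheory.volume 0 1 := by
      have h := IntervalIntegrable.sum (μ := MeasureTheory.volume) (a := (0:ℝ)) (b := 1)
        μ.support (f := fun x t => μ x * g t x) (fun x _ => hterm x)
      have heq : (∑ x ∈ μ.support, fun t => μ x * g t x)
          = (fun t => ∑ x ∈ μ.support, μ x * g t x) := by
        funext t; simp [Finset.sum_apply]
      exact heq ▸ h
    have hmean : ∫ t in (0:ℝ)..1, (∑ x ∈ μ.support, μ x * g t x) =
        ∑ x ∈ μ.support, μ x * f x := by
      rw [integral_finset_sum (fun x (_ : x ∈ μ.support) => hterm x)]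
      apply Finset.sum_congr rfl
      intro x _
      have h2 : ∫ t in (0:ℝ)..1, ((⌊t⌋ : ℤ) : ℝ) = 0 := by
        have := integral_floor' 0
        simpa using this
      have h1 := integral_floor' (f x)
      have hsplit : ∫ t in (0:ℝ)..1, μ x * g t x =
          μ x * ((∫ t in (0:ℝ)..1, ((⌊f x + t⌋ : ℤ) : ℝ)) - ∫ t in (0:ℝ)..1, ((⌊t⌋ : ℤ) : ℝ)) := by
        rw [← integral_sub (intIntegrable_floor (f x)) (by simpa using intIntegrable_floor 0),
          ← integral_const_mul]
      rw [hsplit, h1, h2, sub_zero]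
    calc ∑ x ∈ μ.support, μ x * f x
        = ∫ t in (0:ℝ)..1, (∑ x ∈ μ.support, μ x * g t x) := hmean.symm
    _ ≤ ∫ t in (0:ℝ)..1, v := by
        apply integral_mono_on (by norm_num) hFint (intervalIntegrable_const)
        intro t _
        exact hvmax _ (hgI t)
    _ = v := by simp
  have hfree : freeNorm z μ = v := by
    have h1 : sSup A ≤ v := csSup_le ⟨0, h0A⟩ hAle
    have h2 : v ≤ sSup A := le_csSup hbdd (hIA hvI)
    rw [freeNorm]
    exact le_antisymm h1 h2
  obtain ⟨f, h1, h2, h3, h4⟩ := hvI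
  exact ⟨f, h1, h2, h3, by rw [← h4, hfree]⟩
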